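/- With F_{n,k}(a,q) = [n choose k]_q · q^{k(k+1)/2} / (a q^k;q)_{n+1}, for all n ≥ 1 and all k: F_{n,k}(a,q) = F_{n−1,k}(a,q)/(1 − a q^n) + q^n · F_{n−1,k−1}(a q², q)/(1 − a q^n), with the convention F_{n,k} = 0 if k < 0 or k > n. -/

import Mathlib

/-- The q-shifted factorial `(x;q)_n`. -/
def qPoch {K : Type*} [Field K] (q x : K) (n : ℕ) : K :=
  ∏ j ∈ Finset.range n, (1 - x * q ^ j)

/-- The Gaussian binomial coefficient `[N choose k]_q` with integer arguments,
zero outside the range `0 ≤ k ≤ N`. -/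
def qBinomZ {K : Type*} [Field K] (q : K) (N k : ℤ) : K :=
  if 0 ≤ k ∧ k ≤ N then
    qPoch q q N.toNat / (qPoch q q k.toNat * qPoch q q (N - k).toNat)
  else 0

/-- The summand `F_{n,k}(a,q) = [n,k]_q q^{k(k+1)/2} / (a q^k;q)_{n+1}`;
it vanishes for `k < 0` or `k > n` via the convention on `qBinomZ`. -/
def lebesgueTerm {K : Type*} [Field K] (q a : K) (n : ℕ) (k : ℤ) : K :=
  qBinomZ q n k * q ^ (k * (k + 1) / 2) / qPoch q (a * q ^ k) (n + 1)

section Helpers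
variable {K : Type*} [Field K]

lemma qPoch_succ (q x : K) (n : ℕ) :
    qPoch q x (n+1) = qPoch q x n * (1 - x * q ^ n) :=
  Finset.prod_range_succ _ _

lemma qPoch_succ' (q x : K) (n : ℕ) :
    qPoch q x (n+1) = (1 - x) * qPoch q (x * q) n := by
  rw [qPoch, Finset.prod_range_succ', mul_comm]
  simp only [pow_zero, mul_one, qPoch]
  congr 1
  apply Finset.prod_congr rfl
  intro j _
  ring

lemma qPoch_q_ne (q : K) {n : ℕ} (h : qPoch q q n ≠ 0) {m : ℕ} (hm : m ≤ n) :
    qPoch q q m ≠ 0 := by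
  rw [qPoch, Finset.prod_ne_zero_iff] at h ⊢
  intro j hj
  exact h j (Finset.mem_range.2 (lt_of_lt_of_le (Finset.mem_range.1 hj) hm))

lemma qPoch_a_ne (q a : K) (hq : q ≠ 0) (ha : ∀ j : ℤ, 1 - a * q ^ j ≠ 0)
    (k : ℤ) (n : ℕ) : qPoch q (a * q ^ k) n ≠ 0 := by
  rw [qPoch, Finset.prod_ne_zero_iff]
  intro j _
  have := ha (k + j)
  rwa [zpow_add₀ hq, zpow_natCast, ← mul_assoc] at this

lemma qBinomZ_nat (q : K) (n m : ℕ) (h : m ≤ n) :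
    qBinomZ q n m = qPoch q q n / (qPoch q q m * qPoch q q (n - m)) := by
  rw [qBinomZ, if_pos ⟨Int.natCast_nonneg m, by exact_mod_cast h⟩]
  rw [← Nat.cast_sub h, Int.toNat_natCast, Int.toNat_natCast, Int.toNat_natCast]

lemma zpow_tri (q : K) (m : ℕ) :
    q ^ (((m:ℤ) * ((m:ℤ)+1)) / 2) = q ^ (m*(m+1)/2) := by
  have h : ((m:ℤ) * ((m:ℤ)+1)) / 2 = ((m*(m+1)/2 : ℕ) : ℤ) := by
    rw [Int.natCast_ediv]; push_cast; ring
  rw [h, zpow_natCast]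

lemma tri_succ (s : ℕ) : (s+1)*(s+1+1)/2 = s*(s+1)/2 + (s+1) := by
  obtain ⟨c, hc⟩ := Nat.even_mul_succ_self s
  have hb : (s+1)*(s+1+1) = s*(s+1)+2*(s+1) := by ring
  omega

end Helpers

lemma lebesgue_core {K : Type*} [Field K] (A Ps Pt G T α β γ δ ε ζ Q S : K)
    (hPs : Ps ≠ 0) (hPt : Pt ≠ 0) (hG : G ≠ 0) (hα : α ≠ 0) (hβ : β ≠ 0)
    (hδ : δ ≠ 0) (hε : ε ≠ 0) (hζ : ζ ≠ 0)
    (key : γ * ζ = β * ε + S * (α * δ)) :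
    A * γ / (Ps * α * (Pt * β)) * (T * Q) / (δ * (G * ε))
    = A / (Ps * α * Pt) * (T * Q) / (δ * G) / ζ + Q * S * (A / (Ps * (Pt * β)) * T / (G * ε)) / ζ := by
  simp only [div_mul_eq_mul_div, mul_div_assoc', div_div]
  rw [div_add_div _ _
      (by exact mul_ne_zero (mul_ne_zero (mul_ne_zero (mul_ne_zero hPs hα) hPt) (mul_ne_zero hδ hG)) hζ)
      (by exact mul_ne_zero (mul_ne_zero (mul_ne_zero hPs (mul_ne_zero hPt hβ)) (mul_ne_zero hG hε)) hζ),
    div_eq_div_iff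
      (by exact mul_ne_zero (mul_ne_zero (mul_ne_zero hPs hα) (mul_ne_zero hPt hβ)) (mul_ne_zero hδ (mul_ne_zero hG hε)))
      (by exact mul_ne_zero (mul_ne_zero (mul_ne_zero (mul_ne_zero (mul_ne_zero hPs hα) hPt) (mul_ne_zero hδ hG)) hζ) (mul_ne_zero (mul_ne_zero (mul_ne_zero hPs (mul_ne_zero hPt hβ)) (mul_ne_zero hG hε)) hζ))]
  linear_combination (A * T * Q * ζ * Ps^2 * Pt^2 * G^2 * α * β * δ * ε) * key


/-- The recurrence for the summand of the finite Lebesgue identity: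
`F_{n,k}(a,q) = F_{n−1,k}(a,q)/(1 − a q^n) + q^n F_{n−1,k−1}(a q², q)/(1 − a q^n)`. -/
theorem lebesgue_term_rec {K : Type*} [Field K] (q a : K) (n : ℕ) (k : ℤ)
    (hn : 1 ≤ n) (hq : q ≠ 0) (hqq : qPoch q q n ≠ 0)
    (ha : ∀ j : ℤ, 1 - a * q ^ j ≠ 0) :
    lebesgueTerm q a n k
    = lebesgueTerm q a (n - 1) k / (1 - a * q ^ (n : ℤ)) +
      q ^ (n : ℤ) * lebesgueTerm q (a * q ^ 2) (n - 1) (k - 1) / (1 - a * q ^ (n : ℤ)) := by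
  have haN : ∀ j : ℕ, (1:K) - a * q ^ j ≠ 0 := fun j => by
    have := ha j; rwa [zpow_natCast] at this
  obtain ⟨N, rfl⟩ : ∃ N, n = N + 1 := ⟨n - 1, by omega⟩
  simp only [Nat.add_sub_cancel]
  rcases lt_or_ge k 0 with hk | hk
  · have h1 : qBinomZ q ((N:ℤ)+1) k = 0 := if_neg (by omega)
    have h2 : qBinomZ q (↑N) k = 0 := if_neg (by omega)
    have h3 : qBinomZ q (↑N) (k-1) = 0 := if_neg (by omega)
    simp [lebesgueTerm, h1, h2, h3]
  obtain ⟨m, rfl⟩ : ∃ m : ℕ, k = (m : ℤ) := ⟨k.toNat, by omega⟩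
  rcases lt_or_ge (N+1 : ℤ) (m : ℤ) with hk2 | hk2
  · have h1 : qBinomZ q ((N:ℤ)+1) (↑m) = 0 := if_neg (by push_cast; omega)
    have h2 : qBinomZ q (↑N) (↑m) = 0 := if_neg (by push_cast; omega)
    have h3 : qBinomZ q (↑N) ((↑m)-1) = 0 := if_neg (by push_cast; omega)
    simp [lebesgueTerm, h1, h2, h3]
  -- now 0 ≤ m ≤ N+1
  rcases Nat.eq_zero_or_pos m with rfl | hm1
  · -- m = 0
    simp only [lebesgueTerm]
    have h3 : qBinomZ q (↑N) (((0:ℕ):ℤ)-1) = 0 := if_neg (by omega)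
    rw [h3, qBinomZ_nat q (N+1) 0 (by omega), qBinomZ_nat q N 0 (by omega)]
    have p0 : qPoch q q 0 = 1 := by simp [qPoch]
    have hPN : qPoch q q N ≠ 0 := qPoch_q_ne q hqq (by omega)
    have hqa : qPoch q a (N+1) ≠ 0 := by
      have := qPoch_a_ne q a hq ha 0 (N+1); simpa using this
    have hAn : (1:K) - a * q ^ (N+1) ≠ 0 := haN (N+1)
    simp only [Nat.sub_zero, Nat.cast_zero, zpow_zero, mul_one, pow_zero,
      Int.zero_mul, zpow_natCast, Int.zero_ediv, zero_mul, zero_div, mul_zero, add_zero]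
    rw [qPoch_succ q a (N+1), p0]
    field_simp
  by_cases hmN : m = N + 1
  · -- m = N+1 : top boundary
    subst hmN
    simp only [lebesgueTerm]
    have e1 : ((N+1:ℕ):ℤ) - 1 = ((N:ℕ):ℤ) := by push_cast; ring
    rw [e1, zpow_tri q (N+1), zpow_tri q N]
    have h2 : qBinomZ q (↑N) (↑(N+1)) = 0 := if_neg (by push_cast; omega)
    rw [h2, qBinomZ_nat q (N+1) (N+1) le_rfl, qBinomZ_nat q N N le_rfl]
    simp only [Nat.sub_self, zpow_natCast]
    have p0 : qPoch q q 0 = 1 := by simp [qPoch]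
    have hPN : qPoch q q N ≠ 0 := qPoch_q_ne q hqq (by omega)
    have hG : qPoch q (a*q^(N+2)) (N+1) ≠ 0 := by
      have := qPoch_a_ne q a hq ha ((N:ℤ)+2) (N+1)
      rwa [show ((N:ℤ)+2) = ((N+2:ℕ):ℤ) by push_cast; ring, zpow_natCast] at this
    have hA1 : (1:K) - a * q ^ (N+1) ≠ 0 := haN (N+1)
    rw [qPoch_succ' q (a*q^(N+1)) (N+1), show a*q^(N+1)*q = a*q^(N+2) by ring,
      show a*q^2*q^N = a*q^(N+2) by ring, tri_succ N, pow_add]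
    rw [p0]
    field_simp
    ring
  · -- interior : 1 ≤ m ≤ N
    obtain ⟨s, rfl⟩ : ∃ s, m = s + 1 := ⟨m - 1, by omega⟩
    obtain ⟨t, rfl⟩ : ∃ t, N = s + 1 + t := ⟨N - (s+1), by omega⟩
    simp only [lebesgueTerm]
    have e1 : ((s+1:ℕ):ℤ) - 1 = ((s:ℕ):ℤ) := by push_cast; ring
    rw [e1, zpow_tri q (s+1), zpow_tri q s]
    rw [qBinomZ_nat q (s+1+t+1) (s+1) (by omega), qBinomZ_nat q (s+1+t) (s+1) (by omega),
      qBinomZ_nat q (s+1+t) s (by omega)]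
    simp only [show s+1+t+1-(s+1) = t+1 by omega, show s+1+t-(s+1) = t by omega,
      show s+1+t-s = t+1 by omega, zpow_natCast]
    have d1 : qPoch q (a*q^(s+1)) (s+1+t+1+1)
        = (1 - a*q^(s+1)) * (qPoch q (a*q^(s+2)) (s+t+1) * (1 - a*q^(s+2)*q^(s+t+1))) := by
      rw [qPoch_succ' q (a*q^(s+1)) (s+1+t+1), show a*q^(s+1)*q = a*q^(s+2) by ring,
        show s+1+t+1 = (s+t+1)+1 by omega, qPoch_succ]
    have d2 : qPoch q (a*q^(s+1)) (s+1+t+1)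
        = (1 - a*q^(s+1)) * qPoch q (a*q^(s+2)) (s+t+1) := by
      rw [qPoch_succ' q (a*q^(s+1)) (s+1+t), show a*q^(s+1)*q = a*q^(s+2) by ring,
        show s+1+t = s+t+1 by omega]
    have d3 : qPoch q (a*q^2*q^s) (s+1+t+1)
        = qPoch q (a*q^(s+2)) (s+t+1) * (1 - a*q^(s+2)*q^(s+t+1)) := by
      rw [show a*q^2*q^s = a*q^(s+2) by ring, show s+1+t+1 = (s+t+1)+1 by omega, qPoch_succ]
    have p1 : qPoch q q (s+1+t+1) = qPoch q q (s+t+1) * (1 - q*q^(s+t+1)) := by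
      rw [show s+1+t+1 = (s+t+1)+1 by omega, qPoch_succ]
    have p4 : qPoch q q (s+1+t) = qPoch q q (s+t+1) := by rw [show s+1+t = s+t+1 by omega]
    have p2 : qPoch q q (s+1) = qPoch q q s * (1 - q*q^s) := qPoch_succ q q s
    have p3 : qPoch q q (t+1) = qPoch q q t * (1 - q*q^t) := qPoch_succ q q t
    have hPs : qPoch q q s ≠ 0 := qPoch_q_ne q hqq (by omega)
    have hPt : qPoch q q t ≠ 0 := qPoch_q_ne q hqq (by omega)
    have h1s : (1:K) - q*q^s ≠ 0 := by
      have h := qPoch_q_ne q hqq (show s+1 ≤ s+1+t+1 by omega)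
      rw [qPoch_succ] at h; exact right_ne_zero_of_mul h
    have h1t : (1:K) - q*q^t ≠ 0 := by
      have h := qPoch_q_ne q hqq (show t+1 ≤ s+1+t+1 by omega)
      rw [qPoch_succ] at h; exact right_ne_zero_of_mul h
    have hG : qPoch q (a*q^(s+2)) (s+t+1) ≠ 0 := by
      have := qPoch_a_ne q a hq ha ((s:ℤ)+2) (s+t+1)
      rwa [show ((s:ℤ)+2) = ((s+2:ℕ):ℤ) by push_cast; ring, zpow_natCast] at this
    have hA1 : (1:K) - a * q ^ (s+1) ≠ 0 := haN (s+1)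
    have hA2 : (1:K) - a*q^(s+2)*q^(s+t+1) ≠ 0 := fun h => haN (2*s+t+3) (by linear_combination h)
    have hAn : (1:K) - a * (q ^ (s+1) * q ^ (t+1)) ≠ 0 := fun h =>
      haN (s+1+t+1) (by linear_combination h)
    rw [d1, d2, d3, p1, p2, p3, p4, tri_succ s,
      pow_add q (s*(s+1)/2) (s+1),
      show (q:K)^(s+1+t+1) = q^(s+1)*q^(t+1) by ring]
    exact lebesgue_core (qPoch q q (s+t+1)) (qPoch q q s) (qPoch q q t)
      (qPoch q (a*q^(s+2)) (s+t+1)) (q^(s*(s+1)/2)) (1 - q*q^s) (1 - q*q^t)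
      (1 - q*q^(s+t+1)) (1 - a*q^(s+1)) (1 - a*q^(s+2)*q^(s+t+1))
      (1 - a*(q^(s+1)*q^(t+1))) (q^(s+1)) (q^(t+1))
      hPs hPt hG h1s h1t hA1 hA2 hAn (by ring)
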